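/- For all complex numbers z ≠ 0, |1 - i·z| ≥ |cos(arg z)|. -/

import Mathlib

theorem abs_one_sub_I_mul_ge_abs_cos_arg (z : ℂ) (hz : z ≠ 0) :
    |Real.cos z.arg| ≤ ‖1 - Complex.I * z‖ := by
  set a := z.re with ha
  set b := z.im with hb
  have hsq : ‖1 - Complex.I * z‖ ^ 2 = (1 + b) ^ 2 + a ^ 2 := by
    rw [← Complex.normSq_eq_norm_sq, Complex.normSq_apply]
    simp [ha, hb]
    ring
  have hpos : (0:ℝ) < a ^ 2 + b ^ 2 := by
    have := Complex.normSq_pos.mpr hz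
    rw [Complex.normSq_apply] at this
    nlinarith
  have hcos : Real.cos z.arg = a / ‖z‖ := Complex.cos_arg hz
  have habs : ‖z‖ ^ 2 = a ^ 2 + b ^ 2 := by
    rw [← Complex.normSq_eq_norm_sq, Complex.normSq_apply]; ring
  have hcos2 : Real.cos z.arg ^ 2 = a ^ 2 / (a ^ 2 + b ^ 2) := by
    rw [hcos, div_pow, habs]
  have key : Real.cos z.arg ^ 2 ≤ ‖1 - Complex.I * z‖ ^ 2 := by
    rw [hcos2, hsq, div_le_iff₀ hpos]
    nlinarith [sq_nonneg (a ^ 2 + b ^ 2 + b)]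
  calc |Real.cos z.arg| = Real.sqrt (Real.cos z.arg ^ 2) := (Real.sqrt_sq_eq_abs _).symm
    _ ≤ Real.sqrt (‖1 - Complex.I * z‖ ^ 2) := Real.sqrt_le_sqrt key
    _ = _ := Real.sqrt_sq (norm_nonneg _)
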